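/- For all integers n ≥ 1 and 0 ≤ k ≤ n, the number of linked partitions of [n] with exactly k singletons equals the number of permutation tableaux of length n that have exactly k rows containing neither a topmost 1 nor a restricted 0. -/

import Mathlib

/-- `P` is a linked partition of `[n] = {1,…,n}`: a collection of nonempty
subsets of `[n]` whose union is `[n]`, any two distinct blocks being nearly
disjoint. -/
def IsLinkedPartition (n : ℕ) (P : Finset (Finset ℕ)) : Prop :=
  (∀ B ∈ P, B.Nonempty ∧ B ⊆ Finset.Icc 1 n) ∧
  (∀ x ∈ Finset.Icc 1 n, ∃ B ∈ P, x ∈ B) ∧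
  (∀ B ∈ P, ∀ C ∈ P, B ≠ C → ∀ x ∈ B ∩ C,
    ((∀ y ∈ B, x ≤ y) ∧ 1 < B.card ∧ (∃ y ∈ C, y < x)) ∨
    ((∀ y ∈ C, x ≤ y) ∧ 1 < C.card ∧ (∃ y ∈ B, y < x)))

/-- In the linear representation there is an arc `(i, j)` iff `i < j` and some
block `B ∈ P` has minimum `i` and contains `j`. -/
def IsArc (P : Finset (Finset ℕ)) (i j : ℕ) : Prop :=
  i < j ∧ ∃ B ∈ P, i ∈ B ∧ j ∈ B ∧ ∀ y ∈ B, i ≤ y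

def IsLeftEndpoint (P : Finset (Finset ℕ)) (x : ℕ) : Prop := ∃ j, IsArc P x j

def IsRightEndpoint (P : Finset (Finset ℕ)) (x : ℕ) : Prop := ∃ i, IsArc P i x

/-- An origin is only a left-hand endpoint. -/
def IsOrigin (P : Finset (Finset ℕ)) (x : ℕ) : Prop :=
  IsLeftEndpoint P x ∧ ¬ IsRightEndpoint P x

/-- A transient is both a left-hand and a right-hand endpoint. -/
def IsTransient (P : Finset (Finset ℕ)) (x : ℕ) : Prop :=
  IsLeftEndpoint P x ∧ IsRightEndpoint P x

/-- A destination is only a right-hand endpoint. -/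
def IsDestination (P : Finset (Finset ℕ)) (x : ℕ) : Prop :=
  ¬ IsLeftEndpoint P x ∧ IsRightEndpoint P x

/-- A singleton is an isolated vertex of `[n]`. -/
def IsSingletonVertex (n : ℕ) (P : Finset (Finset ℕ)) (x : ℕ) : Prop :=
  x ∈ Finset.Icc 1 n ∧ ¬ IsLeftEndpoint P x ∧ ¬ IsRightEndpoint P x

/-- No two arcs cross: there are no arcs `(i₁,j₁)`, `(i₂,j₂)` with
`i₁ < i₂ < j₁ < j₂`. -/
def NoncrossingLP (P : Finset (Finset ℕ)) : Prop :=
  ¬ ∃ i₁ i₂ j₁ j₂ : ℕ, IsArc P i₁ j₁ ∧ IsArc P i₂ j₂ ∧ i₁ < i₂ ∧ i₂ < j₁ ∧ j₁ < j₂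

/-- No two arcs nest: there are no arcs `(i₁,j₁)`, `(i₂,j₂)` with
`i₁ < i₂ < j₂ < j₁`. -/
def NonnestingLP (P : Finset (Finset ℕ)) : Prop :=
  ¬ ∃ i₁ i₂ j₁ j₂ : ℕ, IsArc P i₁ j₁ ∧ IsArc P i₂ j₂ ∧ i₁ < i₂ ∧ i₂ < j₂ ∧ j₂ < j₁

/-- The set of descent positions of a permutation `π₁ ⋯ π_n` (0-indexed:
`i` is a descent iff `π (i+1) < π i`). -/
def descentSet {n : ℕ} (π : Equiv.Perm (Fin n)) : Set (Fin n) :=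
  {i | ∃ h : (i : ℕ) + 1 < n, π ⟨(i : ℕ) + 1, h⟩ < π i}

/-- A permutation tableau of length `n`, encoded via the boundary labeling by
`1,…,n` from the top-right corner to the bottom-left corner (label `m`
corresponds to `(⟨m-1, _⟩ : Fin n)`).  `isRow i = true` iff label `i` labels a
row (the label `1` always labels a row).  The cells of the Ferrers diagram are
exactly the pairs (row `i`, column `j`) with `i < j`; rows above have smaller
labels and columns to the left have larger labels.  `filling i j = true`
records that the cell in row `i` and column `j` exists and contains a `1`
(cells containing `0` and non-cells are `false`).  Every column contains at
least one `1`, and no cell containing a `0` has both a `1` above it in its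
column and a `1` to its left in its row. -/
structure PermTableau (n : ℕ) where
  isRow : Fin n → Bool
  filling : Fin n → Fin n → Bool
  first_row : ∀ h : 0 < n, isRow ⟨0, h⟩ = true
  filling_cells : ∀ i j : Fin n, filling i j = true →
    isRow i = true ∧ isRow j = false ∧ i < j
  col_has_one : ∀ j : Fin n, isRow j = false → ∃ i : Fin n, filling i j = true
  no_bad_zero : ∀ i j : Fin n, isRow i = true → isRow j = false → i < j →
    (∃ i' : Fin n, i' < i ∧ filling i' j = true) →
    (∃ j' : Fin n, j < j' ∧ filling i j' = true) →
    filling i j = true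

namespace PermTableau

variable {n : ℕ}

/-- The diagram has a cell in row `i` and column `j` iff `i < j`. -/
def IsCell (T : PermTableau n) (i j : Fin n) : Prop :=
  T.isRow i = true ∧ T.isRow j = false ∧ i < j

/-- The number of rows. -/
noncomputable def numRows (T : PermTableau n) : ℕ := {i : Fin n | T.isRow i = true}.ncard

/-- The number of columns. -/
noncomputable def numCols (T : PermTableau n) : ℕ := {j : Fin n | T.isRow j = false}.ncard

/-- The cell in row `i`, column `j` contains a topmost `1`: it contains a `1`
and no cell above it in column `j` contains a `1`. -/
def TopmostOne (T : PermTableau n) (i j : Fin n) : Prop :=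
  T.filling i j = true ∧ ∀ i' : Fin n, i' < i → T.filling i' j = false

/-- The cell in row `i`, column `j` contains a restricted `0`: it contains a
`0` and some cell above it in column `j` contains a `1`. -/
def RestrictedZero (T : PermTableau n) (i j : Fin n) : Prop :=
  T.IsCell i j ∧ T.filling i j = false ∧ ∃ i' : Fin n, i' < i ∧ T.filling i' j = true

/-- A rightmost restricted `0` is a restricted `0` that is rightmost (minimal
column label) among the restricted `0`'s in its row. -/
def RightmostRestrictedZero (T : PermTableau n) (i j : Fin n) : Prop :=
  T.RestrictedZero i j ∧ ∀ j' : Fin n, T.RestrictedZero i j' → j ≤ j'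

/-- A cell is dotted if it contains a topmost `1` or a rightmost restricted `0`. -/
def Dotted (T : PermTableau n) (i j : Fin n) : Prop :=
  T.TopmostOne i j ∨ T.RightmostRestrictedZero i j

/-- `T` avoids the pattern `J₂`. -/
def AvoidsJ2 (T : PermTableau n) : Prop :=
  ¬ ∃ i₁ i₂ j₁ j₂ : Fin n,
    T.isRow i₁ = true ∧ T.isRow i₂ = true ∧ T.isRow j₁ = false ∧ T.isRow j₂ = false ∧
    i₁ < i₂ ∧ i₂ < j₁ ∧ j₁ < j₂ ∧
    T.Dotted i₁ j₁ ∧ T.Dotted i₂ j₂ ∧ ¬ T.Dotted i₂ j₁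

/-- `T` avoids the pattern `I₂`. -/
def AvoidsI2 (T : PermTableau n) : Prop :=
  ¬ ∃ i₁ i₂ j₁ j₂ : Fin n,
    T.isRow i₁ = true ∧ T.isRow i₂ = true ∧ T.isRow j₁ = false ∧ T.isRow j₂ = false ∧
    i₁ < i₂ ∧ i₂ < j₁ ∧ j₁ < j₂ ∧
    T.Dotted i₁ j₂ ∧ T.Dotted i₂ j₁ ∧ ¬ T.Dotted i₂ j₂

end PermTableau


section GSide
variable {n : ℕ}

def GValid (g : Fin n → Option (Fin n)) : Prop := ∀ x y, g x = some y → y < x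

def Iso (g : Fin n → Option (Fin n)) (x : Fin n) : Prop := g x = none ∧ ∀ y, g y ≠ some x

def isRowG (g : Fin n → Option (Fin n)) (x : Fin n) : Prop := g x = none ∨ ∃ y, g y = some x

def Reach (g : Fin n → Option (Fin n)) : Fin n → Fin n → Prop :=
  Relation.TransGen (fun a b => g a = some b)

variable {g : Fin n → Option (Fin n)}

lemma reach_lt (hg : GValid g) {j i : Fin n} (h : Reach g j i) : i < j := by
  induction h with
  | single h => exact hg _ _ h
  | tail _ h ih => exact lt_trans (hg _ _ h) ih

lemma reach_imem {j i : Fin n} (h : Reach g j i) : ∃ y, g y = some i := by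
  induction h with
  | single h => exact ⟨_, h⟩
  | tail _ h _ => exact ⟨_, h⟩

lemma reach_head {j b : Fin n} (h : Reach g j b) : ∃ y, g j = some y ∧ (b = y ∨ Reach g y b) := by
  rcases (Relation.TransGen.head'_iff).mp h with ⟨c, hc, h2⟩
  rcases (Relation.reflTransGen_iff_eq_or_transGen.mp h2) with heq | h3
  · exact ⟨c, hc, Or.inl heq⟩
  · exact ⟨c, hc, Or.inr h3⟩

lemma reach_gsome {j i : Fin n} (h : Reach g j i) : ∃ y, g j = some y := by
  obtain ⟨y, hy, -⟩ := reach_head h; exact ⟨y, hy⟩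

lemma reach_comp (hg : GValid g) :
    ∀ (j a b : Fin n), Reach g j a → Reach g j b → a = b ∨ Reach g a b ∨ Reach g b a := by
  have key : ∀ (m : ℕ) (j a b : Fin n), j.val ≤ m → Reach g j a → Reach g j b →
      a = b ∨ Reach g a b ∨ Reach g b a := by
    intro m
    induction m with
    | zero =>
      intro j a b hj ha _
      exact absurd (reach_lt hg ha) (by omega)
    | succ m ih =>
      intro j a b hj ha hb
      obtain ⟨y, hy, ha'⟩ := reach_head ha
      obtain ⟨y', hy', hb'⟩ := reach_head hb
      rw [hy] at hy'; injection hy' with hyy; subst hyy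
      rcases ha' with rfl | ha' <;> rcases hb' with rfl | hb'
      · exact Or.inl rfl
      · exact Or.inr (Or.inl hb')
      · exact Or.inr (Or.inr ha')
      · exact ih y a b (by have := hg _ _ hy; omega) ha' hb'
  intro j a b; exact key j.val j a b le_rfl

lemma reach_end (hg : GValid g) :
    ∀ (j y : Fin n), g j = some y → ∃ e, Reach g j e ∧ g e = none := by
  have key : ∀ (m : ℕ) (j y : Fin n), y.val ≤ m → g j = some y →
      ∃ e, Reach g j e ∧ g e = none := by
    intro m
    induction m with
    | zero =>
      intro j y _ hjy
      cases hy : g y with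
      | none => exact ⟨y, Relation.TransGen.single hjy, hy⟩
      | some z => exact absurd (hg _ _ hy) (by omega)
    | succ m ih =>
      intro j y hy hjy
      cases hgy : g y with
      | none => exact ⟨y, Relation.TransGen.single hjy, hgy⟩
      | some z =>
        obtain ⟨e, he, hen⟩ := ih y z (by have := hg _ _ hgy; omega) hgy
        exact ⟨e, Relation.TransGen.head hjy he, hen⟩
  intro j y; exact key y.val j y le_rfl

lemma mem_im_reach_col (hg : GValid g) :
    ∀ (x y : Fin n), g y = some x → ∃ j, ¬ isRowG g j ∧ Reach g j x := by
  have key : ∀ (m : ℕ) (x y : Fin n), n - y.val ≤ m → g y = some x →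
      ∃ j, ¬ isRowG g j ∧ Reach g j x := by
    intro m
    induction m with
    | zero => intro x y hm _; exact absurd hm (by have := y.isLt; omega)
    | succ m ih =>
      intro x y hm hxy
      by_cases hc : isRowG g y
      · rcases hc with hc | ⟨y', hy'⟩
        · rw [hc] at hxy; exact absurd hxy (by simp)
        · have hlt : y < y' := hg _ _ hy'
          obtain ⟨j, hj, hr⟩ := ih y y' (by have := y'.isLt; omega) hy'
          exact ⟨j, hj, hr.tail hxy⟩
      · exact ⟨y, hc, Relation.TransGen.single hxy⟩
  intro x y hxy
  exact key n x y (by omega) hxy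

lemma finmax_eq {α : Type*} [LinearOrder α] {s : Finset α} {c : α}
    (h : c ∈ s) (hm : ∀ b ∈ s, b ≤ c) : s.max = some c := by
  obtain ⟨b, hb⟩ := s.max_of_mem h
  have hbs := Finset.mem_of_max hb
  have hbc : b = c := le_antisymm (hm b hbs) (Finset.le_max_of_eq h hb)
  rw [hb, hbc]; rfl

lemma finmin_eq {α : Type*} [LinearOrder α] {s : Finset α} {c : α}
    (h : c ∈ s) (hm : ∀ b ∈ s, c ≤ b) : s.min = some c := by
  obtain ⟨b, hb⟩ := s.min_of_mem h
  have hbs := Finset.mem_of_min hb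
  have hbc : b = c := le_antisymm (Finset.min_le_of_eq h hb) (hm b hbs)
  rw [hb, hbc]; rfl

end GSide
section Construction
variable {n : ℕ}

open Classical in
noncomputable def colsReach (g : Fin n → Option (Fin n)) (i : Fin n) : Finset (Fin n) :=
  Finset.univ.filter (fun j => ¬ isRowG g j ∧ Reach g j i)

open Classical in
noncomputable def rOpt (g : Fin n → Option (Fin n)) (i : Fin n) : Option (Fin n) :=
  if g i = none then none else (colsReach g i).max

lemma rOpt_of_ne {g : Fin n → Option (Fin n)} {i : Fin n} (hne : ¬ g i = none) :
    rOpt g i = (colsReach g i).max := if_neg hne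

lemma rOpt_of_eq {g : Fin n → Option (Fin n)} {i : Fin n} (h : g i = none) :
    rOpt g i = none := if_pos h

open Classical in
noncomputable def tFilter (g : Fin n → Option (Fin n)) (j : Fin n) : Finset (Fin n) :=
  Finset.univ.filter (fun x => Reach g j x ∧ rOpt g x ≠ some j)

noncomputable def tOpt (g : Fin n → Option (Fin n)) (j : Fin n) : Option (Fin n) :=
  (tFilter g j).max

def fillG (g : Fin n → Option (Fin n)) (i j : Fin n) : Prop :=
  isRowG g i ∧ ¬ isRowG g j ∧ i < j ∧
    (tOpt g j = some i ∨
      ∃ t, tOpt g j = some t ∧ t < i ∧ ∀ c, rOpt g i = some c → j < c)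

variable {g : Fin n → Option (Fin n)}

open Classical

lemma mem_colsReach {i j : Fin n} :
    j ∈ colsReach g i ↔ ¬ isRowG g j ∧ Reach g j i := by
  simp [colsReach]

lemma mem_tFilter {j x : Fin n} :
    x ∈ tFilter g j ↔ Reach g j x ∧ rOpt g x ≠ some j := by
  simp [tFilter]

lemma rOpt_none_of_gnone {i : Fin n} (h : g i = none) : rOpt g i = none := by
  simp [rOpt, h]

lemma rOpt_spec {i c : Fin n} (h : rOpt g i = some c) :
    (g i ≠ none) ∧ ¬ isRowG g c ∧ Reach g c i ∧
      ∀ c', ¬ isRowG g c' → Reach g c' i → c' ≤ c := by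
  by_cases hne : g i = none
  · rw [rOpt_of_eq hne] at h; exact absurd h (by simp)
  · rw [rOpt_of_ne hne] at h
    have hc := Finset.mem_of_max h
    rw [mem_colsReach] at hc
    exact ⟨hne, hc.1, hc.2, fun c' h1 h2 =>
      Finset.le_max_of_eq (mem_colsReach.mpr ⟨h1, h2⟩) h⟩

lemma rOpt_isSome (hg : GValid g) {i : Fin n} (hrow : isRowG g i) (hne : g i ≠ none) :
    ∃ c, rOpt g i = some c := by
  rcases hrow with h | ⟨y, hy⟩
  · exact absurd h hne
  obtain ⟨j, hj, hr⟩ := mem_im_reach_col hg i y hy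
  rw [rOpt_of_ne hne]
  obtain ⟨b, hb⟩ := Finset.max_of_mem (mem_colsReach.mpr ⟨hj, hr⟩)
  exact ⟨b, hb⟩

lemma rOpt_of_reach (hg : GValid g) {c z x : Fin n} (hzx : Reach g z x) (hcz : Reach g c z)
    (hcol : ¬ isRowG g c) (hmax : ∀ c', ¬ isRowG g c' → Reach g c' x → c' ≤ c) :
    rOpt g z = some c := by
  obtain ⟨y, hy⟩ := reach_gsome hzx
  rw [rOpt_of_ne (by simp [hy])]
  exact finmax_eq (mem_colsReach.mpr ⟨hcol, hcz⟩)
    (fun b hb => by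
      rw [mem_colsReach] at hb
      exact hmax b hb.1 (hb.2.trans hzx))

lemma tOpt_spec {j t : Fin n} (h : tOpt g j = some t) :
    Reach g j t ∧ rOpt g t ≠ some j ∧ ∀ x, Reach g j x → rOpt g x ≠ some j → x ≤ t := by
  have hc := Finset.mem_of_max h
  rw [mem_tFilter] at hc
  exact ⟨hc.1, hc.2, fun x h1 h2 => Finset.le_max_of_eq (mem_tFilter.mpr ⟨h1, h2⟩) h⟩

lemma tOpt_isSome (hg : GValid g) {j : Fin n} (hcol : ¬ isRowG g j) :
    ∃ t, tOpt g j = some t := by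
  have hne : g j ≠ none := fun h => hcol (Or.inl h)
  cases hy : g j with
  | none => exact absurd hy hne
  | some y =>
    obtain ⟨e, he, hen⟩ := reach_end hg j y hy
    obtain ⟨b, hb⟩ := Finset.max_of_mem
      (mem_tFilter.mpr ⟨he, by simp [rOpt_none_of_gnone hen]⟩)
    exact ⟨b, hb⟩

lemma tOpt_lt_of_rOpt (hg : GValid g) {x c : Fin n} (hr : rOpt g x = some c) :
    ∃ t, tOpt g c = some t ∧ t < x := by
  obtain ⟨hne, hcol, hcx, hmax⟩ := rOpt_spec hr
  obtain ⟨t, ht⟩ := tOpt_isSome hg hcol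
  refine ⟨t, ht, ?_⟩
  obtain ⟨hjt, hrt, -⟩ := tOpt_spec ht
  by_contra hlt
  push_neg at hlt
  rcases reach_comp hg c t x hjt hcx with heq | h2 | h2
  · exact hrt (heq ▸ hr)
  · exact hrt (rOpt_of_reach hg h2 hjt hcol hmax)
  · exact absurd (reach_lt hg h2) (by omega)

lemma tOpt_eq_of_maxcol (hg : GValid g) {x j : Fin n} (hgx : g x = none)
    (hj : ¬ isRowG g j) (hreach : Reach g j x)
    (hmax : ∀ c', ¬ isRowG g c' → Reach g c' x → c' ≤ j) : tOpt g j = some x := by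
  refine finmax_eq (mem_tFilter.mpr ⟨hreach, by simp [rOpt_none_of_gnone hgx]⟩) ?_
  intro z hz
  rw [mem_tFilter] at hz
  by_contra hzx
  push_neg at hzx
  rcases reach_comp hg j z x hz.1 hreach with heq | h2 | h2
  · exact absurd heq (by omega)
  · exact hz.2 (rOpt_of_reach hg h2 hz.1 hj hmax)
  · exact absurd (reach_lt hg h2) (by omega)

end Construction
section Phi
variable {n : ℕ}

open Classical in
noncomputable def TgT (g : Fin n → Option (Fin n)) (hg : GValid g) : PermTableau n where
  isRow := fun x => decide (isRowG g x)
  filling := fun i j => decide (fillG g i j)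
  first_row := by
    intro h
    rw [decide_eq_true_iff]
    left
    cases hc : g ⟨0, h⟩ with
    | none => rfl
    | some y => exact absurd (hg _ _ hc) (by simp [Fin.lt_def])
  filling_cells := by
    intro i j hf
    rw [decide_eq_true_iff] at hf
    exact ⟨decide_eq_true_iff.mpr hf.1, decide_eq_false_iff_not.mpr hf.2.1, hf.2.2.1⟩
  col_has_one := by
    intro j hj
    rw [decide_eq_false_iff_not] at hj
    obtain ⟨t, ht⟩ := tOpt_isSome hg hj
    obtain ⟨hjt, -, -⟩ := tOpt_spec ht
    refine ⟨t, decide_eq_true_iff.mpr ⟨?_, hj, reach_lt hg hjt, Or.inl ht⟩⟩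
    obtain ⟨y, hy⟩ := reach_imem hjt
    exact Or.inr ⟨y, hy⟩
  no_bad_zero := by
    intro i j hi hj hij h1 h2
    rw [decide_eq_true_iff] at hi
    rw [decide_eq_false_iff_not] at hj
    obtain ⟨i', hi'lt, hi'f⟩ := h1
    obtain ⟨j', hjj', hj'f⟩ := h2
    rw [decide_eq_true_iff] at hi'f hj'f
    rw [decide_eq_true_iff]
    refine ⟨hi, hj, hij, Or.inr ?_⟩
    -- topmost of column j is < i
    have htj : ∃ t, tOpt g j = some t ∧ t < i := by
      rcases hi'f.2.2.2 with h | ⟨t, ht, htl, -⟩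
      · exact ⟨i', h, hi'lt⟩
      · exact ⟨t, ht, lt_trans htl hi'lt⟩
    obtain ⟨t, ht, hti⟩ := htj
    refine ⟨t, ht, hti, ?_⟩
    intro c hc
    rcases hj'f.2.2.2 with h | ⟨t', ht', htl', hall⟩
    · -- tOpt g j' = some i : i is in path of j', so column j' reaches i, c is max col
      obtain ⟨hrj', hrne, -⟩ := tOpt_spec h
      obtain ⟨-, -, -, hmax⟩ := rOpt_spec hc
      have : j' ≤ c := hmax j' hj'f.2.1 hrj'
      have : j' ≠ c := fun he => hrne (he ▸ hc)
      omega
    · have := hall c hc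
      omega
end Phi
section Stat
variable {n : ℕ} {g : Fin n → Option (Fin n)} {hg : GValid g}

lemma fill_Tg {i j : Fin n} : (TgT g hg).filling i j = true ↔ fillG g i j := by
  simp [TgT]

lemma isRow_Tg {x : Fin n} : (TgT g hg).isRow x = true ↔ isRowG g x := by
  simp [TgT]

lemma isRow_Tg_false {x : Fin n} : (TgT g hg).isRow x = false ↔ ¬ isRowG g x := by
  rw [← isRow_Tg (hg := hg)]; simp

lemma special_Tg {x : Fin n} :
    ((TgT g hg).isRow x = true ∧ (¬ ∃ j, (TgT g hg).TopmostOne x j) ∧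
      ¬ ∃ j, (TgT g hg).RestrictedZero x j) ↔ Iso g x := by
  constructor
  · rintro ⟨hrow, hnt, hnr⟩
    rw [isRow_Tg] at hrow
    have hgx : g x = none := by
      by_contra hne
      obtain ⟨c, hc⟩ := rOpt_isSome hg hrow hne
      obtain ⟨t, ht, htx⟩ := tOpt_lt_of_rOpt hg hc
      obtain ⟨-, hccol, hcx, -⟩ := rOpt_spec hc
      obtain ⟨hct, -, -⟩ := tOpt_spec ht
      refine hnr ⟨c, ⟨isRow_Tg.mpr hrow, isRow_Tg_false.mpr hccol, reach_lt hg hcx⟩, ?_, t, htx, ?_⟩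
      · rw [← Bool.not_eq_true, fill_Tg]
        rintro ⟨-, -, -, h | ⟨t', ht', -, hall⟩⟩
        · rw [ht] at h; injection h with h; omega
        · exact absurd (hall c hc) (by omega)
      · rw [fill_Tg]
        obtain ⟨y, hy⟩ := reach_imem hct
        exact ⟨Or.inr ⟨y, hy⟩, hccol, reach_lt hg hct, Or.inl ht⟩
    refine ⟨hgx, ?_⟩
    intro y hy
    obtain ⟨c0, hc0col, hc0r⟩ := mem_im_reach_col hg x y hy
    obtain ⟨c, hcmax⟩ := Finset.max_of_mem (mem_colsReach.mpr ⟨hc0col, hc0r⟩)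
    have hcmem := Finset.mem_of_max hcmax
    rw [mem_colsReach] at hcmem
    have hmax : ∀ c', ¬ isRowG g c' → Reach g c' x → c' ≤ c := fun c' h1 h2 =>
      Finset.le_max_of_eq (mem_colsReach.mpr ⟨h1, h2⟩) hcmax
    have htc := tOpt_eq_of_maxcol hg hgx hcmem.1 hcmem.2 hmax
    refine hnt ⟨c, ?_, ?_⟩
    · rw [fill_Tg]
      exact ⟨Or.inl hgx, hcmem.1, reach_lt hg hcmem.2, Or.inl htc⟩
    · intro i' hi'
      rw [← Bool.not_eq_true, fill_Tg]
      rintro ⟨-, -, -, h | ⟨t', ht', htl', -⟩⟩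
      · rw [htc] at h; injection h with h; omega
      · rw [htc] at ht'; injection ht' with ht'; omega
  · rintro ⟨hgx, him⟩
    refine ⟨isRow_Tg.mpr (Or.inl hgx), ?_, ?_⟩
    · rintro ⟨j, hf, htop⟩
      rw [fill_Tg] at hf
      obtain ⟨-, hcol, -, hbr⟩ := hf
      rcases hbr with h | ⟨t, ht, htl, -⟩
      · obtain ⟨hjx, -, -⟩ := tOpt_spec h
        obtain ⟨y, hy⟩ := reach_imem hjx
        exact him y hy
      · obtain ⟨hjt, -, -⟩ := tOpt_spec ht
        obtain ⟨y, hy⟩ := reach_imem hjt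
        refine absurd (htop t htl) (by
          rw [← Bool.not_eq_true, not_not, fill_Tg]
          exact ⟨Or.inr ⟨y, hy⟩, hcol, reach_lt hg hjt, Or.inl ht⟩)
    · rintro ⟨j, ⟨hcell, hf0, i', hi'x, hi'f⟩⟩
      rw [fill_Tg] at hi'f
      have hcol : ¬ isRowG g j := isRow_Tg_false.mp hcell.2.1
      have htj : ∃ t, tOpt g j = some t ∧ t < x := by
        rcases hi'f.2.2.2 with h | ⟨t, ht, htl, -⟩
        · exact ⟨i', h, hi'x⟩
        · exact ⟨t, ht, lt_trans htl hi'x⟩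
      obtain ⟨t, ht, htx⟩ := htj
      rw [← Bool.not_eq_true, fill_Tg] at hf0
      exact hf0 ⟨Or.inl hgx, hcol, hcell.2.2, Or.inr ⟨t, ht, htx,
        fun c hc => absurd hc (by simp [rOpt_none_of_gnone hgx])⟩⟩
end Stat
section Psi
variable {n : ℕ}

open Classical in
noncomputable def topIdx (T : PermTableau n) (j : Fin n) : Option (Fin n) :=
  (Finset.univ.filter (fun i => T.filling i j = true)).min

open Classical in
noncomputable def rrz (T : PermTableau n) (i : Fin n) : Option (Fin n) :=
  (Finset.univ.filter (fun j => T.RestrictedZero i j)).min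

open Classical in
noncomputable def DT (T : PermTableau n) (c : Fin n) : Finset (Fin n) :=
  Finset.univ.filter (fun i => topIdx T c = some i ∨ rrz T i = some c)

open Classical in
noncomputable def gOfT (T : PermTableau n) (x : Fin n) : Option (Fin n) :=
  if T.isRow x = true then (rrz T x).bind (fun c => ((DT T c).filter (· < x)).max)
  else (DT T x).max

lemma gOfT_pos {T : PermTableau n} {x : Fin n} (h : T.isRow x = true) :
    gOfT T x = (rrz T x).bind (fun c => ((DT T c).filter (· < x)).max) := if_pos h

lemma gOfT_neg {T : PermTableau n} {x : Fin n} (h : ¬ T.isRow x = true) :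
    gOfT T x = (DT T x).max := if_neg h

variable {T : PermTableau n}

open Classical

lemma mem_DT {c i : Fin n} : i ∈ DT T c ↔ topIdx T c = some i ∨ rrz T i = some c := by
  simp [DT]

lemma topIdx_spec {j t : Fin n} (h : topIdx T j = some t) :
    T.filling t j = true ∧ ∀ i, T.filling i j = true → t ≤ i := by
  have hm := Finset.mem_of_min h
  simp only [Finset.mem_filter] at hm
  exact ⟨hm.2, fun i hi => Finset.min_le_of_eq (by simp [hi]) h⟩

lemma topIdx_col (hj : T.isRow j = false) : ∃ t, topIdx T j = some t := by
  obtain ⟨i, hi⟩ := T.col_has_one j hj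
  have hmem : i ∈ Finset.univ.filter (fun i => T.filling i j = true) := by simp [hi]
  obtain ⟨b, hb⟩ := Finset.min_of_mem hmem
  exact ⟨b, hb⟩

lemma rrz_spec {i c : Fin n} (h : rrz T i = some c) :
    T.RestrictedZero i c ∧ ∀ j, T.RestrictedZero i j → c ≤ j := by
  have hm := Finset.mem_of_min h
  simp only [Finset.mem_filter] at hm
  exact ⟨hm.2, fun j hj => Finset.min_le_of_eq (by simp [hj]) h⟩

lemma rrz_of_RZ {i j : Fin n} (h : T.RestrictedZero i j) : ∃ c, rrz T i = some c := by
  have hmem : j ∈ Finset.univ.filter (fun j => T.RestrictedZero i j) := by simp [h]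
  obtain ⟨b, hb⟩ := Finset.min_of_mem hmem
  exact ⟨b, hb⟩

lemma P3 {e w c : Fin n} (ht : topIdx T e = some w) (hr : rrz T w = some c) : e < c := by
  obtain ⟨hrz, -⟩ := rrz_spec hr
  obtain ⟨hcell, hf0, i', hi', hi'f⟩ := hrz
  obtain ⟨hfw, -⟩ := topIdx_spec ht
  rcases lt_trichotomy c e with h | rfl | h
  · have := T.no_bad_zero w c (hcell.1) (hcell.2.1) (hcell.2.2) ⟨i', hi', hi'f⟩ ⟨e, h, hfw⟩
    rw [this] at hf0; exact absurd hf0 (by simp)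
  · rw [hfw] at hf0; exact absurd hf0 (by simp)
  · exact h

lemma P2 {i j : Fin n} (hi : T.isRow i = true) (hj : T.isRow j = false) (hij : i < j) :
    T.filling i j = true ↔
      (topIdx T j = some i ∨
        ∃ t, topIdx T j = some t ∧ t < i ∧ ∀ c, rrz T i = some c → j < c) := by
  constructor
  · intro hf
    obtain ⟨t, ht⟩ := topIdx_col hj
    obtain ⟨hft, hmin⟩ := topIdx_spec ht
    rcases eq_or_lt_of_le (hmin i hf) with heq | hlt
    · exact Or.inl (heq ▸ ht)
    · refine Or.inr ⟨t, ht, hlt, ?_⟩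
      intro c hc
      obtain ⟨hrz, -⟩ := rrz_spec hc
      obtain ⟨hcell, hf0, i', hi', hi'f⟩ := hrz
      rcases lt_trichotomy c j with h | rfl | h
      · have := T.no_bad_zero i c hcell.1 hcell.2.1 hcell.2.2 ⟨i', hi', hi'f⟩ ⟨j, h, hf⟩
        rw [this] at hf0; exact absurd hf0 (by simp)
      · rw [hf] at hf0; exact absurd hf0 (by simp)
      · exact h
  · rintro (h | ⟨t, ht, htl, hall⟩)
    · exact (topIdx_spec h).1
    · by_contra hf
      rw [Bool.not_eq_true] at hf
      have hrz : T.RestrictedZero i j := ⟨⟨hi, hj, hij⟩, hf, t, htl, (topIdx_spec ht).1⟩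
      obtain ⟨c, hc⟩ := rrz_of_RZ hrz
      have := (rrz_spec hc).2 j hrz
      have := hall c hc
      omega

lemma mem_DT_facts {c i : Fin n} (h : i ∈ DT T c) :
    T.isRow i = true ∧ i < c ∧ T.isRow c = false := by
  rw [mem_DT] at h
  rcases h with h | h
  · have := T.filling_cells _ _ (topIdx_spec h).1
    exact ⟨this.1, this.2.2, this.2.1⟩
  · have := (rrz_spec h).1.1
    exact ⟨this.1, this.2.2, this.2.1⟩

lemma gOfT_valid : GValid (gOfT T) := by
  intro x y h
  by_cases hx : T.isRow x = true
  · rw [gOfT_pos hx] at h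
    rcases hb : rrz T x with - | c
    · rw [hb] at h; dsimp only [Option.bind] at h; simp at h
    · rw [hb]  at h
      dsimp only [Option.bind] at h
      have := Finset.mem_of_max h
      simp only [Finset.mem_filter] at this
      exact this.2
  · rw [gOfT_neg hx] at h
    exact (mem_DT_facts (Finset.mem_of_max h)).2.1

end Psi
section RoundD
variable {n : ℕ} {g : Fin n → Option (Fin n)} {hg : GValid g}

lemma reach_step {x y z : Fin n} (hxy : g x = some y) (h : Reach g x z) :
    z = y ∨ Reach g y z := by
  obtain ⟨y', hy', hz⟩ := reach_head h
  rw [hxy] at hy'; injection hy' with hy'; subst hy'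
  exact hz

lemma RZ_Tg {x c : Fin n} (hrow : isRowG g x) (hc : rOpt g x = some c) :
    (TgT g hg).RestrictedZero x c := by
  obtain ⟨t, ht, htx⟩ := tOpt_lt_of_rOpt hg hc
  obtain ⟨-, hccol, hcx, -⟩ := rOpt_spec hc
  obtain ⟨hct, -, -⟩ := tOpt_spec ht
  refine ⟨⟨isRow_Tg.mpr hrow, isRow_Tg_false.mpr hccol, reach_lt hg hcx⟩, ?_, t, htx, ?_⟩
  · rw [← Bool.not_eq_true, fill_Tg]
    rintro ⟨-, -, -, h | ⟨t', ht', -, hall⟩⟩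
    · rw [ht] at h; injection h with h; omega
    · exact absurd (hall c hc) (by omega)
  · rw [fill_Tg]
    obtain ⟨y, hy⟩ := reach_imem hct
    exact ⟨Or.inr ⟨y, hy⟩, hccol, reach_lt hg hct, Or.inl ht⟩

lemma noRZ_Tg {x j : Fin n} (hgx : g x = none) : ¬ (TgT g hg).RestrictedZero x j := by
  rintro ⟨hcell, hf0, i', hi'x, hi'f⟩
  rw [fill_Tg] at hi'f
  have hcol : ¬ isRowG g j := isRow_Tg_false.mp hcell.2.1
  have htj : ∃ t, tOpt g j = some t ∧ t < x := by
    rcases hi'f.2.2.2 with h | ⟨t, ht, htl, -⟩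
    · exact ⟨i', h, hi'x⟩
    · exact ⟨t, ht, lt_trans htl hi'x⟩
  obtain ⟨t, ht, htx⟩ := htj
  rw [← Bool.not_eq_true, fill_Tg] at hf0
  exact hf0 ⟨Or.inl hgx, hcol, hcell.2.2, Or.inr ⟨t, ht, htx,
    fun c hc => absurd hc (by simp [rOpt_none_of_gnone hgx])⟩⟩

lemma topIdx_Tg {j : Fin n} (hj : ¬ isRowG g j) :
    topIdx (TgT g hg) j = tOpt g j := by
  obtain ⟨t, ht⟩ := tOpt_isSome hg hj
  obtain ⟨hjt, -, -⟩ := tOpt_spec ht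
  rw [ht]
  refine finmin_eq ?_ ?_
  · simp only [Finset.mem_filter, Finset.mem_univ, true_and]
    rw [fill_Tg]
    obtain ⟨y, hy⟩ := reach_imem hjt
    exact ⟨Or.inr ⟨y, hy⟩, hj, reach_lt hg hjt, Or.inl ht⟩
  · intro b hb
    simp only [Finset.mem_filter, Finset.mem_univ, true_and] at hb
    rw [fill_Tg] at hb
    rcases hb.2.2.2 with h | ⟨t', ht', htl', -⟩
    · rw [ht] at h; injection h with h; omega
    · rw [ht] at ht'; injection ht' with ht'; omega

lemma rrz_Tg (i : Fin n) : rrz (TgT g hg) i = rOpt g i := by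
  by_cases hrow : isRowG g i
  · cases hgi : g i with
    | none =>
      rw [rOpt_none_of_gnone hgi]
      rw [rrz]
      refine Finset.min_eq_top.mpr ?_
      rw [Finset.eq_empty_iff_forall_notMem]
      intro j hj
      simp only [Finset.mem_filter] at hj
      exact noRZ_Tg (hg := hg) hgi hj.2
    | some y =>
      obtain ⟨c, hc⟩ := rOpt_isSome hg hrow (by simp [hgi])
      rw [hc]
      refine finmin_eq ?_ ?_
      · simp only [Finset.mem_filter, Finset.mem_univ, true_and]
        exact RZ_Tg hrow hc
      · intro b hb
        simp only [Finset.mem_filter, Finset.mem_univ, true_and] at hb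
        obtain ⟨hcell, hf0, i', hi', hi'f⟩ := hb
        rw [fill_Tg] at hi'f
        rw [← Bool.not_eq_true, fill_Tg] at hf0
        have hcol : ¬ isRowG g b := isRow_Tg_false.mp hcell.2.1
        have htj : ∃ t, tOpt g b = some t ∧ t < i := by
          rcases hi'f.2.2.2 with h | ⟨t, ht, htl, -⟩
          · exact ⟨i', h, hi'⟩
          · exact ⟨t, ht, lt_trans htl hi'⟩
        obtain ⟨t, ht, hti⟩ := htj
        by_contra hcb
        push_neg at hcb
        exact hf0 ⟨hrow, hcol, hcell.2.2, Or.inr ⟨t, ht, hti, fun c' hc' => by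
          rw [hc] at hc'; injection hc' with hc'; omega⟩⟩
  · -- column i : both none
    have hgi : g i ≠ none := fun h => hrow (Or.inl h)
    have h1 : rrz (TgT g hg) i = none := by
      rw [rrz]
      refine Finset.min_eq_top.mpr ?_
      rw [Finset.eq_empty_iff_forall_notMem]
      intro j hj
      simp only [Finset.mem_filter] at hj
      have := hj.2.1.1
      rw [isRow_Tg] at this
      exact hrow this
    have h2 : rOpt g i = none := by
      rw [rOpt_of_ne hgi]
      refine Finset.max_eq_bot.mpr ?_
      rw [Finset.eq_empty_iff_forall_notMem]
      intro c hcm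
      rw [mem_colsReach] at hcm
      obtain ⟨y, hy⟩ := reach_imem hcm.2
      exact hrow (Or.inr ⟨y, hy⟩)
    rw [h1, h2]

lemma roundD : gOfT (TgT g hg) = g := by
  funext x
  by_cases hrow : isRowG g x
  · rw [gOfT_pos (isRow_Tg.mpr hrow), rrz_Tg]
    cases hgx : g x with
    | none => rw [rOpt_none_of_gnone hgx]; rfl
    | some y =>
      obtain ⟨c, hc⟩ := rOpt_isSome hg hrow (by simp [hgx])
      rw [hc]; dsimp only [Option.bind]
      obtain ⟨-, hccol, hcx, hcmax⟩ := rOpt_spec hc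
      have hyD : y ∈ DT (TgT g hg) c := by
        rw [mem_DT, rrz_Tg]
        by_cases hry : rOpt g y = some c
        · exact Or.inr hry
        · left
          rw [topIdx_Tg hccol]
          refine finmax_eq (mem_tFilter.mpr ⟨hcx.tail hgx, hry⟩) ?_
          intro z hz
          rw [mem_tFilter] at hz
          by_contra hzy
          push_neg at hzy
          rcases reach_comp hg c z x hz.1 hcx with heq | h2 | h2
          · exact hz.2 (heq ▸ hc)
          · exact hz.2 (rOpt_of_reach hg h2 hz.1 hccol hcmax)
          · rcases reach_step hgx h2 with heq | h3
            · omega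
            · exact absurd (reach_lt hg h3) (by omega)
      refine finmax_eq ?_ ?_
      · simp only [Finset.mem_filter]
        exact ⟨hyD, hg _ _ hgx⟩
      · intro b hb
        simp only [Finset.mem_filter] at hb
        obtain ⟨hbD, hbx⟩ := hb
        rw [mem_DT, rrz_Tg, topIdx_Tg hccol] at hbD
        have hreach : Reach g c b := by
          rcases hbD with h | h
          · exact (tOpt_spec h).1
          · exact (rOpt_spec h).2.2.1
        rcases reach_comp hg c b x hreach hcx with heq | h2 | h2
        · exact absurd heq (by intro h; rw [h] at hbx; exact absurd hbx (lt_irrefl x))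
        · exact absurd (reach_lt hg h2) (by simp only [Fin.lt_def] at *; omega)
        · rcases reach_step hgx h2 with heq | h3
          · exact le_of_eq heq
          · exact le_of_lt (reach_lt hg h3)
  · rw [gOfT_neg (by rw [← isRow_Tg_false (hg := hg)] at hrow; simp [hrow])]
    cases hgx : g x with
    | none => exact absurd (Or.inl hgx) hrow
    | some y =>
      have hxcol : ¬ isRowG g x := hrow
      refine finmax_eq ?_ ?_
      · rw [mem_DT, rrz_Tg]
        by_cases hry : rOpt g y = some x
        · exact Or.inr hry
        · left
          rw [topIdx_Tg hxcol]
          refine finmax_eq (mem_tFilter.mpr ⟨Relation.TransGen.single hgx, hry⟩) ?_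
          intro z hz
          rw [mem_tFilter] at hz
          rcases reach_step hgx hz.1 with heq | h3
          · exact le_of_eq heq
          · exact le_of_lt (reach_lt hg h3)
      · intro b hb
        rw [mem_DT, rrz_Tg, topIdx_Tg hxcol] at hb
        have hreach : Reach g x b := by
          rcases hb with h | h
          · exact (tOpt_spec h).1
          · exact (rOpt_spec h).2.2.1
        rcases reach_step hgx hreach with heq | h3
        · exact le_of_eq heq
        · exact le_of_lt (reach_lt hg h3)
end RoundD
section RoundC
variable {n : ℕ} {T : PermTableau n}

open Classical

lemma t_min {c t w : Fin n} (ht : topIdx T c = some t) (hw : w ∈ DT T c) : t ≤ w := by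
  rw [mem_DT] at hw
  rcases hw with h | h
  · rw [ht] at h; injection h with h; omega
  · obtain ⟨⟨-, -, -⟩, -, i', hi', hi'f⟩ := (rrz_spec h).1
    exact le_trans ((topIdx_spec ht).2 i' hi'f) (le_of_lt hi')

lemma rrz_of_memDT {c z t : Fin n} (ht : topIdx T c = some t) (hz : z ∈ DT T c) (hne : z ≠ t) :
    rrz T z = some c := by
  rw [mem_DT] at hz
  rcases hz with h | h
  · rw [ht] at h; injection h with h; exact absurd h.symm hne
  · exact h

lemma gOfT_max {c w : Fin n} (hcol : T.isRow c = false) (hw : w ∈ DT T c)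
    (hmax : ∀ u ∈ DT T c, u ≤ w) : gOfT T c = some w := by
  rw [gOfT_neg (by simp [hcol])]
  exact finmax_eq hw hmax

lemma gOfT_succ {c w z : Fin n} (hw : w ∈ DT T c) (hz : z ∈ DT T c) (hwz : w < z)
    (hmin : ∀ u ∈ DT T c, w < u → z ≤ u) : gOfT T z = some w := by
  have hzfacts := mem_DT_facts hz
  obtain ⟨t, ht⟩ := topIdx_col hzfacts.2.2
  have hzt : z ≠ t := by
    have := t_min ht hw
    intro h; subst h; omega
  have hrz : rrz T z = some c := rrz_of_memDT ht hz hzt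
  rw [gOfT_pos hzfacts.1, hrz]; dsimp only [Option.bind]
  refine finmax_eq ?_ ?_
  · simp only [Finset.mem_filter]
    exact ⟨hw, hwz⟩
  · intro u hu
    simp only [Finset.mem_filter] at hu
    by_contra hwu
    push_neg at hwu
    exact absurd (hmin u hu.1 hwu) (by have := hu.2; simp only [Fin.lt_def, Fin.le_def] at *; omega)

lemma F1 {c : Fin n} (hcol : T.isRow c = false) :
    ∀ w ∈ DT T c, Reach (gOfT T) c w := by
  have key : ∀ m : ℕ, ∀ w ∈ DT T c, ((DT T c).filter (fun u => w < u)).card ≤ m →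
      Reach (gOfT T) c w := by
    intro m
    induction m with
    | zero =>
      intro w hw hcard
      have hS : (DT T c).filter (fun u => w < u) = ∅ := Finset.card_eq_zero.mp (le_antisymm hcard (Nat.zero_le _))
      have hmax : ∀ u ∈ DT T c, u ≤ w := by
        intro u hu
        by_contra h
        push_neg at h
        have : u ∈ (DT T c).filter (fun u => w < u) := by simp [hu, h]
        rw [hS] at this; simp at this
      exact Relation.TransGen.single (gOfT_max hcol hw hmax)
    | succ m ih =>
      intro w hw hcard
      rcases Finset.eq_empty_or_nonempty ((DT T c).filter (fun u => w < u)) with hS | hS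
      · have hmax : ∀ u ∈ DT T c, u ≤ w := by
          intro u hu
          by_contra h
          push_neg at h
          have : u ∈ (DT T c).filter (fun u => w < u) := by simp [hu, h]
          rw [hS] at this; simp at this
        exact Relation.TransGen.single (gOfT_max hcol hw hmax)
      · set z := ((DT T c).filter (fun u => w < u)).min' hS with hzdef
        have hzmem := Finset.min'_mem _ hS
        simp only [Finset.mem_filter] at hzmem
        have hstep : gOfT T z = some w :=
          gOfT_succ hw hzmem.1 hzmem.2 (fun u hu hwu => Finset.min'_le _ u (by simp [hu, hwu]))
        have hsub : (DT T c).filter (fun u => z < u) ⊆ (DT T c).filter (fun u => w < u) := by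
          intro u hu
          simp only [Finset.mem_filter] at hu ⊢
          exact ⟨hu.1, lt_trans hzmem.2 hu.2⟩
        have hcard2 : ((DT T c).filter (fun u => z < u)).card < ((DT T c).filter (fun u => w < u)).card := by
          refine Finset.card_lt_card ⟨hsub, fun hsub2 => ?_⟩
          have : z ∈ (DT T c).filter (fun u => z < u) := hsub2 (Finset.mem_filter.mpr hzmem)
          simp at this
        exact (ih z hzmem.1 (by omega)).tail hstep
  intro w hw
  exact key _ w hw le_rfl

lemma InvI {c x : Fin n} (hcol : T.isRow c = false) (h : Reach (gOfT T) c x) :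
    ∃ e, T.isRow e = false ∧ c ≤ e ∧ x ∈ DT T e := by
  induction h with
  | single h =>
    rw [gOfT_neg (by simp [hcol])] at h
    exact ⟨c, hcol, le_rfl, Finset.mem_of_max h⟩
  | tail hcb h ih =>
    obtain ⟨e, hecol, hce, hbD⟩ := ih
    rename_i b x'
    have hbrow := (mem_DT_facts hbD).1
    rw [gOfT_pos hbrow] at h
    rcases hrb : rrz T b with - | c'
    · rw [hrb] at h; dsimp only [Option.bind] at h; simp at h
    · rw [hrb] at h; dsimp only [Option.bind] at h
      have hx' := Finset.mem_of_max h
      simp only [Finset.mem_filter] at hx'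
      have hc'col : T.isRow c' = false := (rrz_spec hrb).1.1.2.1
      have hcc' : c ≤ c' := by
        rw [mem_DT] at hbD
        rcases hbD with hb | hb
        · have := P3 hb hrb
          omega
        · rw [hrb] at hb; injection hb with hb; rw [← hb] at hce; exact hce
      exact ⟨c', hc'col, hcc', hx'.1⟩

lemma InvI' {j t x : Fin n} (hcol : T.isRow j = false) (ht : topIdx T j = some t)
    (h : Reach (gOfT T) j x) : x ∈ DT T j ∨ x < t := by
  induction h with
  | single h =>
    rw [gOfT_neg (by simp [hcol])] at h
    exact Or.inl (Finset.mem_of_max h)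
  | tail hcb h ih =>
    rename_i b x'
    rcases ih with hb | hb
    · by_cases hbt : b = t
      · subst hbt
        exact Or.inr (gOfT_valid _ _ h)
      · have hrb : rrz T b = some j := rrz_of_memDT ht hb hbt
        have hbrow := (mem_DT_facts hb).1
        rw [gOfT_pos hbrow, hrb] at h; dsimp only [Option.bind] at h
        have := Finset.mem_of_max h
        simp only [Finset.mem_filter] at this
        exact Or.inl this.1
    · exact Or.inr (lt_trans (gOfT_valid _ _ h) hb)

lemma C1 {x : Fin n} : isRowG (gOfT T) x ↔ T.isRow x = true := by
  constructor
  · intro h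
    by_contra hx
    rw [Bool.not_eq_true] at hx
    rcases h with h | ⟨y, hy⟩
    · obtain ⟨t, ht⟩ := topIdx_col hx
      rw [gOfT_neg (by simp [hx])] at h
      obtain ⟨b, hb⟩ := Finset.max_of_mem (mem_DT.mpr (Or.inl ht))
      rw [hb] at h; exact Option.some_ne_none b h
    · by_cases hyr : T.isRow y = true
      · rw [gOfT_pos hyr] at hy
        rcases hry : rrz T y with - | c'
        · rw [hry] at hy; dsimp only [Option.bind] at hy; simp at hy
        · rw [hry] at hy; dsimp only [Option.bind] at hy
          have := Finset.mem_of_max hy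
          simp only [Finset.mem_filter] at this
          have := (mem_DT_facts this.1).1
          rw [this] at hx; exact absurd hx (by simp)
      · rw [Bool.not_eq_true] at hyr
        rw [gOfT_neg (by simp [hyr])] at hy
        have := (mem_DT_facts (Finset.mem_of_max hy)).1
        rw [this] at hx; exact absurd hx (by simp)
  · intro hx
    cases hgx : gOfT T x with
    | none => exact Or.inl hgx
    | some y =>
      right
      rw [gOfT_pos hx] at hgx
      rcases hrx : rrz T x with - | c
      · rw [hrx] at hgx; dsimp only [Option.bind] at hgx; simp at hgx
      · have hxD : x ∈ DT T c := mem_DT.mpr (Or.inr hrx)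
        have hccol : T.isRow c = false := (rrz_spec hrx).1.1.2.1
        rcases Finset.eq_empty_or_nonempty ((DT T c).filter (fun u => x < u)) with hS | hS
        · refine ⟨c, gOfT_max hccol hxD ?_⟩
          intro u hu
          by_contra hcon
          push_neg at hcon
          have : u ∈ (DT T c).filter (fun u => x < u) := by simp [hu, hcon]
          rw [hS] at this; simp at this
        · set z := ((DT T c).filter (fun u => x < u)).min' hS with hzdef
          have hzmem := Finset.min'_mem _ hS
          simp only [Finset.mem_filter] at hzmem
          exact ⟨z, gOfT_succ hxD hzmem.1 hzmem.2
            (fun u hu hwu => Finset.min'_le _ u (by simp [hu, hwu]))⟩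

lemma C2 {i : Fin n} : rOpt (gOfT T) i = rrz T i := by
  by_cases hrow : T.isRow i = true
  · rcases hri : rrz T i with - | c
    · have hgi : gOfT T i = none := by
        rw [gOfT_pos hrow, hri]; rfl
      rw [rOpt_none_of_gnone hgi]
    · have hRZ := (rrz_spec hri).1
      have hccol : T.isRow c = false := hRZ.1.2.1
      have hiD : i ∈ DT T c := mem_DT.mpr (Or.inr hri)
      have hgi : gOfT T i ≠ none := by
        rw [gOfT_pos hrow, hri]; dsimp only [Option.bind]
        obtain ⟨t, ht⟩ := topIdx_col hccol
        have htlt : t < i := by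
          obtain ⟨-, -, i', hi', hi'f⟩ := hRZ
          exact lt_of_le_of_lt ((topIdx_spec ht).2 i' hi'f) hi'
        have : t ∈ (DT T c).filter (fun u => u < i) := by
          simp [mem_DT.mpr (Or.inl ht), htlt]
        obtain ⟨b, hb⟩ := Finset.max_of_mem this
        rw [hb]; exact fun hcon => Option.some_ne_none b hcon
      rw [rOpt_of_ne hgi]
      refine finmax_eq (mem_colsReach.mpr ⟨?_, F1 hccol i hiD⟩) ?_
      · rw [C1]; simp [hccol]
      · intro c' hc'
        rw [mem_colsReach] at hc'
        have hc'col : T.isRow c' = false := by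
          have := hc'.1; rw [C1] at this; simpa using this
        obtain ⟨e, hecol, hce, hiD'⟩ := InvI hc'col hc'.2
        rw [mem_DT] at hiD'
        rcases hiD' with h | h
        · have := P3 h hri
          omega
        · rw [hri] at h; injection h with h; omega
  · rw [Bool.not_eq_true] at hrow
    have h1 : rrz T i = none := by
      rw [rrz]
      refine Finset.min_eq_top.mpr ?_
      rw [Finset.eq_empty_iff_forall_notMem]
      intro j hj
      simp only [Finset.mem_filter] at hj
      have := hj.2.1.1
      rw [this] at hrow; exact absurd hrow (by simp)
    have hgi : gOfT T i ≠ none := by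
      rw [gOfT_neg (by simp [hrow])]
      obtain ⟨t, ht⟩ := topIdx_col hrow
      obtain ⟨b, hb⟩ := Finset.max_of_mem (mem_DT.mpr (Or.inl ht))
      rw [hb]; exact fun hcon => Option.some_ne_none b hcon
    rw [h1, rOpt_of_ne hgi]
    refine Finset.max_eq_bot.mpr ?_
    rw [Finset.eq_empty_iff_forall_notMem]
    intro c hcm
    rw [mem_colsReach] at hcm
    have hccol : T.isRow c = false := by
      have := hcm.1; rw [C1] at this; simpa using this
    obtain ⟨e, hecol, hce, hiD⟩ := InvI hccol hcm.2
    have := (mem_DT_facts hiD).1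
    rw [this] at hrow; exact absurd hrow (by simp)

lemma C3 {j : Fin n} (hcol : T.isRow j = false) : tOpt (gOfT T) j = topIdx T j := by
  obtain ⟨t, ht⟩ := topIdx_col hcol
  rw [ht]
  refine finmax_eq (mem_tFilter.mpr ⟨F1 hcol t (mem_DT.mpr (Or.inl ht)), ?_⟩) ?_
  · rw [C2]
    rcases hrt : rrz T t with - | c
    · simp
    · have := P3 ht hrt
      intro hcon; injection hcon with hcon; omega
  · intro z hz
    rw [mem_tFilter] at hz
    rcases InvI' hcol ht hz.1 with hD | hlt
    · by_cases hzt : z = t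
      · exact le_of_eq hzt
      · exact absurd (by rw [C2]; exact rrz_of_memDT ht hD hzt) hz.2
    · exact le_of_lt hlt

lemma permTableau_ext {T1 T2 : PermTableau n} (h1 : T1.isRow = T2.isRow)
    (h2 : T1.filling = T2.filling) : T1 = T2 := by
  cases T1; cases T2
  dsimp at h1 h2
  subst h1; subst h2
  rfl

lemma roundC : TgT (gOfT T) gOfT_valid = T := by
  refine permTableau_ext (funext fun x => ?_) (funext fun i => funext fun j => ?_)
  · show decide (isRowG (gOfT T) x) = T.isRow x
    by_cases h : T.isRow x = true
    · simp [C1, h]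
    · rw [Bool.not_eq_true] at h
      rw [h]
      simp only [decide_eq_false_iff_not]
      rw [C1, h]; simp
  · show decide (fillG (gOfT T) i j) = T.filling i j
    by_cases hi : T.isRow i = true
    · by_cases hj : T.isRow j = false
      · by_cases hij : i < j
        · have heq : fillG (gOfT T) i j ↔ T.filling i j = true := by
            rw [P2 hi hj hij, fillG]
            constructor
            · rintro ⟨-, -, -, hbr⟩
              rcases hbr with h | ⟨t, h, hl, hall⟩
              · rw [C3 hj] at h; exact Or.inl h
              · rw [C3 hj] at h
                exact Or.inr ⟨t, h, hl, fun c hc => hall c (by rw [C2]; exact hc)⟩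
            · rintro (h | ⟨t, h, hl, hall⟩)
              · exact ⟨C1.mpr hi, by rw [C1]; simp [hj], hij, Or.inl (by rw [C3 hj]; exact h)⟩
              · exact ⟨C1.mpr hi, by rw [C1]; simp [hj], hij,
                  Or.inr ⟨t, by rw [C3 hj]; exact h, hl, fun c hc => hall c (by rw [C2] at hc; exact hc)⟩⟩
          by_cases hf : T.filling i j = true
          · rw [hf]; simp [heq.mpr hf]
          · rw [Bool.not_eq_true] at hf
            rw [hf]
            simp only [decide_eq_false_iff_not]
            intro hcon
            rw [heq] at hcon
            rw [hcon] at hf; exact absurd hf (by simp)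
        · have hf : T.filling i j = false := by
            rcases hc : T.filling i j with - | -
            · rfl
            · exact absurd (T.filling_cells i j hc).2.2 hij
          rw [hf]
          simp only [decide_eq_false_iff_not]
          rintro ⟨-, -, h, -⟩
          exact hij h
      · rw [Bool.not_eq_false] at hj
        have hf : T.filling i j = false := by
          rcases hc : T.filling i j with - | -
          · rfl
          · have := (T.filling_cells i j hc).2.1
            rw [this] at hj; exact absurd hj (by simp)
        rw [hf]
        simp only [decide_eq_false_iff_not]
        rintro ⟨-, h, -, -⟩
        rw [C1] at h
        exact h (by simp [hj])
    · rw [Bool.not_eq_true] at hi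
      have hf : T.filling i j = false := by
        rcases hc : T.filling i j with - | -
        · rfl
        · have := (T.filling_cells i j hc).1
          rw [this] at hi; exact absurd hi (by simp)
      rw [hf]
      simp only [decide_eq_false_iff_not]
      rintro ⟨h, -, -, -⟩
      rw [C1, hi] at h
      exact absurd h (by simp)
end RoundC
section EquivGT
variable {n : ℕ}

noncomputable def equivGT : {g : Fin n → Option (Fin n) // GValid g} ≃ PermTableau n where
  toFun gp := TgT gp.1 gp.2
  invFun T := ⟨gOfT T, gOfT_valid⟩
  left_inv gp := Subtype.ext roundD
  right_inv T := roundC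

lemma stat_Tg {g : Fin n → Option (Fin n)} (hg : GValid g) :
    {i : Fin n | (TgT g hg).isRow i = true ∧ (¬ ∃ j : Fin n, (TgT g hg).TopmostOne i j) ∧
      ¬ ∃ j : Fin n, (TgT g hg).RestrictedZero i j} = {x : Fin n | Iso g x} :=
  Set.ext fun _ => special_Tg

noncomputable def equivGTk (k : ℕ) :
    {gp : {g : Fin n → Option (Fin n) // GValid g} // {x : Fin n | Iso gp.1 x}.ncard = k} ≃
    {T : PermTableau n // {i : Fin n | T.isRow i = true ∧ (¬ ∃ j : Fin n, T.TopmostOne i j) ∧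
      ¬ ∃ j : Fin n, T.RestrictedZero i j}.ncard = k} :=
  Equiv.subtypeEquiv equivGT (fun gp => by
    have he : equivGT gp = TgT gp.1 gp.2 := rfl
    rw [he, stat_Tg gp.2])
end EquivGT
section LPside
variable {n : ℕ}

open Classical in
noncomputable def blockOf (g : Fin n → Option (Fin n)) (i : Fin n) : Finset ℕ :=
  insert ((i : ℕ) + 1) ((Finset.univ.filter (fun j => g j = some i)).image (fun j => (j : ℕ) + 1))

open Classical in
noncomputable def LPg (g : Fin n → Option (Fin n)) : Finset (Finset ℕ) :=
  ((Finset.univ.filter (fun i => ∃ j, g j = some i)).image (blockOf g)) ∪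
  ((Finset.univ.filter (fun x => Iso g x)).image (fun x => {(x : ℕ) + 1}))

variable {g : Fin n → Option (Fin n)}

lemma mem_blockOf {i : Fin n} {x : ℕ} :
    x ∈ blockOf g i ↔ x = (i : ℕ) + 1 ∨ ∃ j, g j = some i ∧ (j : ℕ) + 1 = x := by
  simp [blockOf]

lemma mem_LPg {B : Finset ℕ} :
    B ∈ LPg g ↔ (∃ i : Fin n, (∃ j, g j = some i) ∧ blockOf g i = B) ∨
      (∃ x : Fin n, Iso g x ∧ {(x : ℕ) + 1} = B) := by
  simp [LPg]

lemma blockOf_min (hg : GValid g) {i : Fin n} : ∀ y ∈ blockOf g i, (i : ℕ) + 1 ≤ y := by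
  intro y hy
  rw [mem_blockOf] at hy
  rcases hy with rfl | ⟨j, hj, rfl⟩
  · exact le_rfl
  · have := hg _ _ hj
    simp only [Fin.lt_def] at this
    omega

lemma self_mem_blockOf {i : Fin n} : (i : ℕ) + 1 ∈ blockOf g i :=
  mem_blockOf.mpr (Or.inl rfl)

lemma blockOf_card (hg : GValid g) {i j : Fin n} (hj : g j = some i) :
    1 < (blockOf g i).card := by
  refine Finset.one_lt_card.mpr ⟨(i : ℕ) + 1, self_mem_blockOf, (j : ℕ) + 1,
    mem_blockOf.mpr (Or.inr ⟨j, hj, rfl⟩), ?_⟩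
  have := hg _ _ hj
  simp only [Fin.lt_def] at this
  omega

lemma isArc_LPg (hg : GValid g) {a b : ℕ} :
    IsArc (LPg g) a b ↔ ∃ i j : Fin n, g j = some i ∧ a = (i : ℕ) + 1 ∧ b = (j : ℕ) + 1 := by
  constructor
  · rintro ⟨hab, B, hB, haB, hbB, hmin⟩
    rw [mem_LPg] at hB
    rcases hB with ⟨i, ⟨j0, hj0⟩, rfl⟩ | ⟨x, hIso, rfl⟩
    · have ha : a = (i : ℕ) + 1 :=
        le_antisymm (hmin _ self_mem_blockOf) (blockOf_min hg a haB)
      subst ha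
      rcases mem_blockOf.mp hbB with hb | ⟨j, hj, hjb⟩
      · omega
      · exact ⟨i, j, hj, rfl, hjb.symm⟩
    · simp only [Finset.mem_singleton] at haB hbB
      omega
  · rintro ⟨i, j, hij, rfl, rfl⟩
    have hlt := hg _ _ hij
    simp only [Fin.lt_def] at hlt
    refine ⟨by omega, blockOf g i, mem_LPg.mpr (Or.inl ⟨i, ⟨j, hij⟩, rfl⟩),
      self_mem_blockOf, mem_blockOf.mpr (Or.inr ⟨j, hij, rfl⟩), blockOf_min hg⟩

lemma left_iff_LPg (hg : GValid g) {x : Fin n} :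
    IsLeftEndpoint (LPg g) ((x : ℕ) + 1) ↔ ∃ y, g y = some x := by
  constructor
  · rintro ⟨b, harc⟩
    obtain ⟨i, j, hij, ha, -⟩ := (isArc_LPg hg).mp harc
    have : i = x := Fin.ext (by omega)
    exact ⟨j, this ▸ hij⟩
  · rintro ⟨y, hy⟩
    exact ⟨(y : ℕ) + 1, (isArc_LPg hg).mpr ⟨x, y, hy, rfl, rfl⟩⟩

lemma right_iff_LPg (hg : GValid g) {x : Fin n} :
    IsRightEndpoint (LPg g) ((x : ℕ) + 1) ↔ g x ≠ none := by
  constructor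
  · rintro ⟨a, harc⟩
    obtain ⟨i, j, hij, -, hb⟩ := (isArc_LPg hg).mp harc
    have : j = x := Fin.ext (by omega)
    subst this
    simp [hij]
  · intro hne
    cases hgx : g x with
    | none => exact absurd hgx hne
    | some i => exact ⟨(i : ℕ) + 1, (isArc_LPg hg).mpr ⟨i, x, hgx, rfl, rfl⟩⟩

lemma singleton_LPg (hg : GValid g) :
    {x : ℕ | IsSingletonVertex n (LPg g) x} = (fun x' : Fin n => (x' : ℕ) + 1) '' {x' | Iso g x'} := by
  ext x
  constructor
  · rintro ⟨hIcc, hnl, hnr⟩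
    rw [Finset.mem_Icc] at hIcc
    refine ⟨⟨x - 1, by omega⟩, ⟨?_, ?_⟩, by simp; omega⟩
    · cases hgx : g ⟨x - 1, by omega⟩ with
      | none => rfl
      | some i =>
        exact absurd ((right_iff_LPg hg (x := ⟨x - 1, by omega⟩)).mpr (by simp [hgx]))
          (by simpa [Nat.sub_add_cancel hIcc.1] using hnr)
    · intro y hy
      exact absurd ((left_iff_LPg hg (x := ⟨x - 1, by omega⟩)).mpr ⟨y, hy⟩)
        (by simpa [Nat.sub_add_cancel hIcc.1] using hnl)
  · rintro ⟨x', hIso, rfl⟩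
    show IsSingletonVertex n (LPg g) ((x' : ℕ) + 1)
    exact ⟨Finset.mem_Icc.mpr ⟨by omega, by have := x'.isLt; omega⟩,
      fun h => absurd ((left_iff_LPg hg).mp h) (by simpa using fun y => hIso.2 y),
      fun h => absurd ((right_iff_LPg hg).mp h) (by simp [hIso.1])⟩

lemma ILP_LPg (hg : GValid g) : IsLinkedPartition n (LPg g) := by
  refine ⟨?_, ?_, ?_⟩
  · intro B hB
    rw [mem_LPg] at hB
    rcases hB with ⟨i, -, rfl⟩ | ⟨x, -, rfl⟩
    · refine ⟨⟨_, self_mem_blockOf⟩, ?_⟩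
      intro y hy
      rw [mem_blockOf] at hy
      rw [Finset.mem_Icc]
      rcases hy with rfl | ⟨j, -, rfl⟩
      · exact ⟨by omega, by have := i.isLt; omega⟩
      · exact ⟨by omega, by have := j.isLt; omega⟩
    · exact ⟨⟨_, Finset.mem_singleton_self _⟩, by
        intro y hy
        rw [Finset.mem_singleton] at hy
        subst hy
        exact Finset.mem_Icc.mpr ⟨by omega, by have := x.isLt; omega⟩⟩
  · intro x hx
    rw [Finset.mem_Icc] at hx
    set x' : Fin n := ⟨x - 1, by omega⟩ with hx'def
    have hxx : (x' : ℕ) + 1 = x := by simp [hx'def]; omega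
    cases hgx : g x' with
    | some i =>
      exact ⟨blockOf g i, mem_LPg.mpr (Or.inl ⟨i, ⟨x', hgx⟩, rfl⟩),
        mem_blockOf.mpr (Or.inr ⟨x', hgx, hxx⟩)⟩
    | none =>
      by_cases him : ∃ y, g y = some x'
      · exact ⟨blockOf g x', mem_LPg.mpr (Or.inl ⟨x', him, rfl⟩),
          mem_blockOf.mpr (Or.inl hxx.symm)⟩
      · push_neg at him
        exact ⟨{(x' : ℕ) + 1}, mem_LPg.mpr (Or.inr ⟨x', ⟨hgx, him⟩, rfl⟩),
          by rw [hxx]; exact Finset.mem_singleton_self x⟩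
  · intro B hB C hC hne x hx
    rw [Finset.mem_inter] at hx
    rw [mem_LPg] at hB hC
    rcases hB with ⟨i, ⟨jB, hjB⟩, rfl⟩ | ⟨xB, hIsoB, rfl⟩ <;>
      rcases hC with ⟨i', ⟨jC, hjC⟩, rfl⟩ | ⟨xC, hIsoC, rfl⟩
    · have hii' : i ≠ i' := fun h => hne (by rw [h])
      rcases mem_blockOf.mp hx.1 with h1 | ⟨j1, hj1, hj1x⟩ <;>
        rcases mem_blockOf.mp hx.2 with h2 | ⟨j2, hj2, hj2x⟩
      · exact absurd (Fin.ext (by omega) : i = i') hii'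
      · left
        refine ⟨fun y hy => h1 ▸ blockOf_min hg y hy, blockOf_card hg hjB, ?_⟩
        refine ⟨(i' : ℕ) + 1, self_mem_blockOf, ?_⟩
        have := hg _ _ hj2
        simp only [Fin.lt_def] at this
        omega
      · right
        refine ⟨fun y hy => h2 ▸ blockOf_min hg y hy, blockOf_card hg hjC, ?_⟩
        refine ⟨(i : ℕ) + 1, self_mem_blockOf, ?_⟩
        have := hg _ _ hj1
        simp only [Fin.lt_def] at this
        omega
      · have : j1 = j2 := Fin.ext (by omega)
        subst this
        rw [hj1] at hj2
        injection hj2 with hj2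
        exact absurd hj2 hii'
    · exfalso
      rcases mem_blockOf.mp hx.1 with h1 | ⟨j1, hj1, hj1x⟩ <;>
        rw [Finset.mem_singleton] at hx
      · have : i = xC := Fin.ext (by have := hx.2; omega)
        subst this
        exact hIsoC.2 jB hjB
      · have : j1 = xC := Fin.ext (by have := hx.2; omega)
        subst this
        exact absurd hj1 (by simp [hIsoC.1])
    · exfalso
      rcases mem_blockOf.mp hx.2 with h1 | ⟨j1, hj1, hj1x⟩ <;>
        rw [Finset.mem_singleton] at hx
      · have : i' = xB := Fin.ext (by have := hx.1; omega)
        subst this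
        exact hIsoB.2 jC hjC
      · have : j1 = xB := Fin.ext (by have := hx.1; omega)
        subst this
        exact absurd hj1 (by simp [hIsoB.1])
    · exfalso
      simp only [Finset.mem_singleton] at hx
      have : xB = xC := Fin.ext (by have h1 := hx.1; have h2 := hx.2; omega)
      exact hne (by rw [this])
end LPside
section LPside2
variable {n : ℕ}

open Classical in
noncomputable def gOfP (P : Finset (Finset ℕ)) (j : Fin n) : Option (Fin n) :=
  if h : ∃ i : Fin n, IsArc P ((i : ℕ) + 1) ((j : ℕ) + 1) then some h.choose else none

variable {P : Finset (Finset ℕ)}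

lemma arc_unique (hP : IsLinkedPartition n P) {a a' b : ℕ}
    (h : IsArc P a b) (h' : IsArc P a' b) : a = a' := by
  obtain ⟨hab, B, hB, haB, hbB, hmin⟩ := h
  obtain ⟨hab', B', hB', haB', hbB', hmin'⟩ := h'
  by_cases hBB : B = B'
  · subst hBB
    exact le_antisymm (hmin a' haB') (hmin' a haB)
  · exfalso
    rcases hP.2.2 B hB B' hB' hBB b (Finset.mem_inter.mpr ⟨hbB, hbB'⟩) with
      ⟨hm, -, -⟩ | ⟨hm, -, -⟩
    · exact absurd (hm a haB) (by omega)
    · exact absurd (hm a' haB') (by omega)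

lemma gOfP_iff (hP : IsLinkedPartition n P) {i j : Fin n} :
    gOfP P j = some i ↔ IsArc P ((i : ℕ) + 1) ((j : ℕ) + 1) := by
  rw [gOfP]
  split
  · next h =>
    have hspec := h.choose_spec
    constructor
    · intro he
      injection he with he
      rw [← he]
      exact hspec
    · intro harc
      have : (h.choose : ℕ) + 1 = (i : ℕ) + 1 := arc_unique hP hspec harc
      exact congrArg some (Fin.ext (by omega))
  · next h =>
    constructor
    · intro he; exact absurd he (by simp)
    · intro harc; exact absurd ⟨i, harc⟩ h

lemma gOfP_valid (hP : IsLinkedPartition n P) : GValid (gOfP P : Fin n → Option (Fin n)) := by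
  intro x y h
  have := ((gOfP_iff hP).mp h).1
  simp only [Fin.lt_def]
  omega

lemma gOfP_LPg {g : Fin n → Option (Fin n)} (hg : GValid g) : gOfP (LPg g) = g := by
  funext j
  cases hgj : g j with
  | some i => exact (gOfP_iff (ILP_LPg hg)).mpr ((isArc_LPg hg).mpr ⟨i, j, hgj, rfl, rfl⟩)
  | none =>
    cases hc : gOfP (LPg g) j with
    | none => rfl
    | some i =>
      obtain ⟨i', j', hij', hi', hj'⟩ := (isArc_LPg hg).mp ((gOfP_iff (ILP_LPg hg)).mp hc)
      have : j' = j := Fin.ext (by omega)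
      subst this
      rw [hgj] at hij'
      exact absurd hij' (by simp)

lemma same_min_block (hP : IsLinkedPartition n P) {B C : Finset ℕ} {m : ℕ}
    (hB : B ∈ P) (hC : C ∈ P) (hmB : m ∈ B) (hmC : m ∈ C)
    (hminB : ∀ y ∈ B, m ≤ y) (hminC : ∀ y ∈ C, m ≤ y) : B = C := by
  by_contra hne
  rcases hP.2.2 B hB C hC hne m (Finset.mem_inter.mpr ⟨hmB, hmC⟩) with
    ⟨-, -, y, hy, hylt⟩ | ⟨-, -, y, hy, hylt⟩
  · exact absurd (hminC y hy) (by omega)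
  · exact absurd (hminB y hy) (by omega)

lemma block_arc {B : Finset ℕ} {m b : ℕ} (hB : B ∈ P) (hmB : m ∈ B)
    (hmin : ∀ y ∈ B, m ≤ y) (hbB : b ∈ B) (hne : b ≠ m) : IsArc P m b :=
  ⟨lt_of_le_of_ne (hmin b hbB) (Ne.symm hne), B, hB, hmB, hbB, hmin⟩

lemma singleton_no_arc (hP : IsLinkedPartition n P) {x : ℕ} (hx : {x} ∈ P) :
    (∀ b, ¬ IsArc P x b) ∧ (∀ a, ¬ IsArc P a x) := by
  constructor
  · rintro b ⟨hab, B, hB, hxB, hbB, hmin⟩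
    have hne : ({x} : Finset ℕ) ≠ B := by
      intro h
      rw [← h] at hbB
      rw [Finset.mem_singleton] at hbB
      omega
    rcases hP.2.2 {x} hx B hB hne x
      (Finset.mem_inter.mpr ⟨Finset.mem_singleton_self x, hxB⟩) with
      ⟨-, hcard, -⟩ | ⟨-, -, y, hy, hylt⟩
    · simp at hcard
    · rw [Finset.mem_singleton] at hy
      omega
  · rintro a ⟨hab, B, hB, haB, hxB, hmin⟩
    have hne : ({x} : Finset ℕ) ≠ B := by
      intro h
      rw [← h] at haB
      rw [Finset.mem_singleton] at haB
      omega
    rcases hP.2.2 {x} hx B hB hne x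
      (Finset.mem_inter.mpr ⟨Finset.mem_singleton_self x, hxB⟩) with
      ⟨-, hcard, -⟩ | ⟨hm, -, y, hy, hylt⟩
    · simp at hcard
    · rw [Finset.mem_singleton] at hy
      omega

lemma LPg_gOfP (hP : IsLinkedPartition n P) : LPg (gOfP P : Fin n → Option (Fin n)) = P := by
  ext B
  constructor
  · intro hB
    rw [mem_LPg] at hB
    rcases hB with ⟨i, ⟨j, hji⟩, rfl⟩ | ⟨x, hIso, rfl⟩
    · obtain ⟨hlt, B', hB', hiB', hjB', hmin⟩ := (gOfP_iff hP).mp hji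
      have heq : blockOf (gOfP P) i = B' := by
        apply Finset.ext
        intro y
        constructor
        · intro hy
          rcases mem_blockOf.mp hy with rfl | ⟨j', hj', rfl⟩
          · exact hiB'
          · obtain ⟨-, B'', hB'', hiB'', hj'B'', hmin''⟩ := (gOfP_iff hP).mp hj'
            rw [← same_min_block hP hB'' hB' hiB'' hiB' hmin'' hmin]
            exact hj'B''
        · intro hy
          by_cases hyi : y = (i : ℕ) + 1
          · exact mem_blockOf.mpr (Or.inl hyi)
          · have hyIcc := (hP.1 B' hB').2 hy
            rw [Finset.mem_Icc] at hyIcc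
            have harc : IsArc P ((i : ℕ) + 1) y := block_arc hB' hiB' hmin hy hyi
            refine mem_blockOf.mpr (Or.inr ⟨⟨y - 1, by omega⟩, ?_, by simp; omega⟩)
            rw [gOfP_iff hP]
            have : (y - 1) + 1 = y := by omega
            simp only [this]
            exact harc
      rw [heq]
      exact hB'
    · have hIcc : (x : ℕ) + 1 ∈ Finset.Icc 1 n := Finset.mem_Icc.mpr ⟨by omega, by have := x.isLt; omega⟩
      obtain ⟨C, hC, hxC⟩ := hP.2.1 _ hIcc
      have hCeq : C = {(x : ℕ) + 1} := by
        apply Finset.eq_singleton_iff_unique_mem.mpr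
        refine ⟨hxC, ?_⟩
        intro z hz
        by_contra hzx
        by_cases hm : ∀ w ∈ C, (x : ℕ) + 1 ≤ w
        · have harc : IsArc P ((x : ℕ) + 1) z := block_arc hC hxC hm hz hzx
          have hzIcc := (hP.1 C hC).2 hz
          rw [Finset.mem_Icc] at hzIcc
          refine hIso.2 ⟨z - 1, by omega⟩ ?_
          rw [gOfP_iff hP]
          have : (z - 1) + 1 = z := by omega
          rw [this]
          exact harc
        · push_neg at hm
          obtain ⟨w, hw, hwlt⟩ := hm
          have hCne : C.Nonempty := ⟨w, hw⟩
          set m := C.min' hCne with hmdef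
          have hmC : m ∈ C := C.min'_mem hCne
          have hmin : ∀ y ∈ C, m ≤ y := fun y hy => C.min'_le y hy
          have hmIcc := (hP.1 C hC).2 hmC
          rw [Finset.mem_Icc] at hmIcc
          have hmx : m < (x : ℕ) + 1 := lt_of_le_of_lt (hmin w hw) hwlt
          have harc : IsArc P m ((x : ℕ) + 1) := block_arc hC hmC hmin hxC (by omega)
          have : gOfP P x = some ⟨m - 1, by omega⟩ := by
            rw [gOfP_iff hP]
            have : (m - 1) + 1 = m := by omega
            simp only [this]
            exact harc
          rw [hIso.1] at this
          exact absurd this (by simp)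
      rw [← hCeq]
      exact hC
  · intro hB
    have hBne : B.Nonempty := (hP.1 B hB).1
    set m := B.min' hBne with hmdef
    have hmB : m ∈ B := B.min'_mem hBne
    have hmin : ∀ y ∈ B, m ≤ y := fun y hy => B.min'_le y hy
    have hmIcc := (hP.1 B hB).2 hmB
    rw [Finset.mem_Icc] at hmIcc
    set m' : Fin n := ⟨m - 1, by omega⟩ with hm'def
    have hm'm : (m' : ℕ) + 1 = m := by simp [hm'def]; omega
    by_cases hsing : B = {m}
    · refine mem_LPg.mpr (Or.inr ⟨m', ⟨?_, ?_⟩, by rw [hm'm, ← hsing]⟩)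
      · cases hc : gOfP P m' with
        | none => rfl
        | some i =>
          have harc := (gOfP_iff hP).mp hc
          rw [hm'm] at harc
          exact absurd harc ((singleton_no_arc hP (hsing ▸ hB)).2 _)
      · intro y hy
        have harc := (gOfP_iff hP).mp hy
        rw [hm'm] at harc
        exact (singleton_no_arc hP (hsing ▸ hB)).1 _ harc
    · have hex : ∃ b ∈ B, b ≠ m := by
        by_contra hcon
        push_neg at hcon
        exact hsing (Finset.eq_singleton_iff_unique_mem.mpr ⟨hmB, hcon⟩)
      obtain ⟨b, hbB, hbm⟩ := hex
      have hbIcc := (hP.1 B hB).2 hbB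
      rw [Finset.mem_Icc] at hbIcc
      have harcb : IsArc P m b := block_arc hB hmB hmin hbB hbm
      have hgb : gOfP P ⟨b - 1, by omega⟩ = some m' := by
        rw [gOfP_iff hP, hm'm]
        have : (b - 1) + 1 = b := by omega
        rw [this]
        exact harcb
      refine mem_LPg.mpr (Or.inl ⟨m', ⟨_, hgb⟩, ?_⟩)
      apply Finset.ext
      intro y
      constructor
      · intro hy
        rcases mem_blockOf.mp hy with rfl | ⟨j', hj', rfl⟩
        · rw [hm'm]; exact hmB
        · have harc := (gOfP_iff hP).mp hj'
          rw [hm'm] at harc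
          obtain ⟨-, B'', hB'', hmB'', hjB'', hmin''⟩ := harc
          rw [same_min_block hP hB hB'' hmB hmB'' hmin hmin'']
          exact hjB''
      · intro hy
        by_cases hym : y = m
        · exact mem_blockOf.mpr (Or.inl (by rw [hym, hm'm]))
        · have hyIcc := (hP.1 B hB).2 hy
          rw [Finset.mem_Icc] at hyIcc
          have harc : IsArc P m y := block_arc hB hmB hmin hy hym
          refine mem_blockOf.mpr (Or.inr ⟨⟨y - 1, by omega⟩, ?_, by simp; omega⟩)
          rw [gOfP_iff hP, hm'm]
          have : (y - 1) + 1 = y := by omega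
          rw [this]
          exact harc

noncomputable def equivLP :
    {P : Finset (Finset ℕ) // IsLinkedPartition n P} ≃ {g : Fin n → Option (Fin n) // GValid g} where
  toFun Pp := ⟨gOfP Pp.1, gOfP_valid Pp.2⟩
  invFun gp := ⟨LPg gp.1, ILP_LPg gp.2⟩
  left_inv Pp := Subtype.ext (LPg_gOfP Pp.2)
  right_inv gp := Subtype.ext (gOfP_LPg gp.2)

end LPside2
lemma stat_LP {n : ℕ} (Pp : {P : Finset (Finset ℕ) // IsLinkedPartition n P}) :
    {x : ℕ | IsSingletonVertex n Pp.1 x}.ncard = {x : Fin n | Iso (gOfP Pp.1 : Fin n → Option (Fin n)) x}.ncard := by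
  have hg := gOfP_valid Pp.2
  conv_lhs => rw [← LPg_gOfP Pp.2]
  rw [singleton_LPg hg]
  exact Set.ncard_image_of_injective _ (fun a b h => Fin.ext (by omega))

/-- The number of linked partitions of `[n]` with exactly `k` singletons
equals the number of permutation tableaux of length `n` having exactly `k`
rows that contain neither a topmost `1` nor a restricted `0`. -/
theorem linkedPartitions_singletons_eq_tableaux_emptyRows (n k : ℕ)
    (hn : 1 ≤ n) (hk : k ≤ n) :
    Nat.card {P : Finset (Finset ℕ) // IsLinkedPartition n P ∧
        {x : ℕ | IsSingletonVertex n P x}.ncard = k} =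
      Nat.card {T : PermTableau n //
        {i : Fin n | T.isRow i = true ∧ (¬ ∃ j : Fin n, T.TopmostOne i j) ∧
          ¬ ∃ j : Fin n, T.RestrictedZero i j}.ncard = k} := by
  have e1 : {P : Finset (Finset ℕ) // IsLinkedPartition n P ∧
      {x : ℕ | IsSingletonVertex n P x}.ncard = k} ≃
      {Pp : {P : Finset (Finset ℕ) // IsLinkedPartition n P} //
        {x : ℕ | IsSingletonVertex n Pp.1 x}.ncard = k} :=
    (Equiv.subtypeSubtypeEquivSubtypeInter (IsLinkedPartition n)
      (fun P => {x : ℕ | IsSingletonVertex n P x}.ncard = k)).symm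
  have e2 : {Pp : {P : Finset (Finset ℕ) // IsLinkedPartition n P} //
        {x : ℕ | IsSingletonVertex n Pp.1 x}.ncard = k} ≃
      {gp : {g : Fin n → Option (Fin n) // GValid g} // {x : Fin n | Iso gp.1 x}.ncard = k} :=
    Equiv.subtypeEquiv equivLP (fun Pp => by
      have : (equivLP Pp).1 = (gOfP Pp.1 : Fin n → Option (Fin n)) := rfl
      rw [this, stat_LP Pp])
  exact Nat.card_congr ((e1.trans e2).trans (equivGTk k))
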